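/- arXiv:1903.06976 — 2 statements merged into one kernel-verified Lean document; each statement's English description precedes it below -/
import Mathlib

section
/- Let g: [a,b] → ℝ be a function of finite q-bounded variation, meaning var_q(g) := sup ( Σ_{k} |g(x_{k+1}) − g(x_k)|^q )^{1/q} < ∞, where the sup is over finite increasing sequences a ≤ x₀ < x₁ < ⋯ < x_n ≤ b. Then for every ε > 0 there is a finite partition of [a,b] into intervals J₁, …, J_N such that var_q(g restricted to the interior of J_i) < ε for each i. -/
open scoped ENNReal

/-- The `q`-variation of `g` over a set `S ⊆ ℝ`: the supremum, over finite increasing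
sequences of points of `S`, of `(Σ |g(x_{k+1}) - g(x_k)|^q)^(1/q)`. -/
noncomputable def varq (q : ℝ) (g : ℝ → ℝ) (S : Set ℝ) : ℝ≥0∞ :=
  ⨆ (n : ℕ) (x : Fin (n + 1) → ℝ) (_ : StrictMono x) (_ : ∀ k, x k ∈ S),
    (∑ k : Fin n, ENNReal.ofReal (|g (x k.succ) - g (x k.castSucc)| ^ q)) ^ (1 / q)



noncomputable def pvar (q : ℝ) (g : ℝ → ℝ) {n : ℕ} (x : Fin (n + 1) → ℝ) : ℝ≥0∞ :=
  ∑ k : Fin n, ENNReal.ofReal (|g (x k.succ) - g (x k.castSucc)| ^ q)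

open Classical in
noncomputable def Wq (q : ℝ) (g : ℝ → ℝ) (S : Set ℝ) : ℝ≥0∞ :=
  ⨆ p : Σ n : ℕ, Fin (n + 1) → ℝ,
    if StrictMono p.2 ∧ ∀ k, p.2 k ∈ S then pvar q g p.2 else 0

lemma pvar_le_Wq {q : ℝ} {g : ℝ → ℝ} {S : Set ℝ} {n : ℕ} {x : Fin (n + 1) → ℝ}
    (hx : StrictMono x) (hS : ∀ k, x k ∈ S) : pvar q g x ≤ Wq q g S := by
  rw [Wq]
  refine le_iSup_of_le ⟨n, x⟩ ?_
  rw [if_pos (⟨hx, hS⟩ : StrictMono x ∧ ∀ k, x k ∈ S)]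

lemma Wq_mono {q : ℝ} {g : ℝ → ℝ} {S T : Set ℝ} (h : S ⊆ T) : Wq q g S ≤ Wq q g T := by
  rw [Wq, Wq]
  apply iSup_le; intro p
  split_ifs with hp
  · exact pvar_le_Wq hp.1 fun k => h (hp.2 k)
  · exact zero_le

lemma pvar_concat {q : ℝ} {g : ℝ → ℝ} {n m : ℕ} (x : Fin (n + 1) → ℝ) (y : Fin (m + 1) → ℝ)
    (hx : StrictMono x) (hy : StrictMono y) (hsep : ∀ i j, x i < y j) :
    ∃ z : Fin (n + m + 1 + 1) → ℝ, StrictMono z ∧ (∀ k, z k ∈ Set.range x ∪ Set.range y) ∧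
      pvar q g x + pvar q g y ≤ pvar q g z := by
  classical
  set Z : ℕ → ℝ := fun i =>
    if h : i < n + 1 then x ⟨i, h⟩
    else y ⟨min (i - (n + 1)) m, Nat.lt_succ_of_le (min_le_right _ _)⟩ with hZ
  refine ⟨fun i => Z i.val, ?_, ?_, ?_⟩
  · intro i j hij
    have hij' : i.val < j.val := hij
    have hj2 : j.val < n + m + 2 := j.isLt
    by_cases hjn : j.val < n + 1
    · have hin : i.val < n + 1 := lt_trans hij' hjn
      simp only [hZ, dif_pos hin, dif_pos hjn]
      exact hx (by exact hij')
    · by_cases hin : i.val < n + 1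
      · simp only [hZ, dif_pos hin, dif_neg hjn]
        exact hsep _ _
      · simp only [hZ, dif_neg hin, dif_neg hjn]
        apply hy
        have h1 : i.val - (n + 1) < j.val - (n + 1) := by omega
        have h2 : j.val - (n + 1) ≤ m := by omega
        simp only [Fin.mk_lt_mk]
        omega
  · intro k
    by_cases hk : k.val < n + 1
    · simp only [hZ, dif_pos hk]; exact Or.inl (Set.mem_range_self _)
    · simp only [hZ, dif_neg hk]; exact Or.inr (Set.mem_range_self _)
  · set f : ℕ → ℝ≥0∞ := fun i => ENNReal.ofReal (|g (Z (i + 1)) - g (Z i)| ^ q) with hf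
    have hz : pvar q g (fun i : Fin (n + m + 1 + 1) => Z i.val) =
        ∑ i ∈ Finset.range (n + m + 1), f i := by
      rw [pvar, ← Fin.sum_univ_eq_sum_range]
      simp only [hf, Fin.val_succ, Fin.coe_castSucc]
    have hxs : pvar q g x = ∑ i ∈ Finset.range n, f i := by
      rw [pvar, ← Fin.sum_univ_eq_sum_range]
      apply Finset.sum_congr rfl
      intro i _
      have hi1 : (i : ℕ) < n + 1 := by omega
      have hi2 : (i : ℕ) + 1 < n + 1 := by omega
      have e1 : Z i.val = x i.castSucc := by
        simp only [hZ]; rw [dif_pos hi1]; congr 1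
      have e2 : Z (i.val + 1) = x i.succ := by
        simp only [hZ]; rw [dif_pos hi2]; congr 1
      simp only [hf, e1, e2]
    have hys : pvar q g y = ∑ i ∈ Finset.range m, f (n + 1 + i) := by
      rw [pvar, ← Fin.sum_univ_eq_sum_range]
      apply Finset.sum_congr rfl
      intro i _
      have hi1 : ¬ (n + 1 + (i : ℕ) < n + 1) := by omega
      have hi2 : ¬ (n + 1 + (i : ℕ) + 1 < n + 1) := by omega
      have e1 : Z (n + 1 + i.val) = y i.castSucc := by
        simp only [hZ]; rw [dif_neg hi1]; congr 1
        apply Fin.ext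
        simp only [Fin.coe_castSucc]
        have h3 : n + 1 + i.val - (n + 1) = i.val := by omega
        rw [h3]
        exact Nat.min_eq_left (by omega)
      have e2 : Z (n + 1 + i.val + 1) = y i.succ := by
        simp only [hZ]; rw [dif_neg hi2]; congr 1
        apply Fin.ext
        simp only [Fin.val_succ]
        have h3 : n + 1 + i.val + 1 - (n + 1) = i.val + 1 := by omega
        rw [h3]
        exact Nat.min_eq_left (by omega)
      simp only [hf, e1, e2]
    rw [hz, hxs, hys]
    have hsplit : ∑ i ∈ Finset.range (n + m + 1), f i =
        ∑ i ∈ Finset.range (n + 1), f i + ∑ i ∈ Finset.range m, f (n + 1 + i) := by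
      have h1 : n + m + 1 = (n + 1) + m := by omega
      rw [h1, Finset.sum_range_add]
    rw [hsplit, Finset.sum_range_succ]
    exact add_le_add (le_add_right le_rfl) le_rfl

lemma Wq_add_le {q : ℝ} {g : ℝ → ℝ} {S₁ S₂ S : Set ℝ} (h1 : S₁ ⊆ S) (h2 : S₂ ⊆ S)
    (hsep : ∀ u ∈ S₁, ∀ v ∈ S₂, u < v) : Wq q g S₁ + Wq q g S₂ ≤ Wq q g S := by
  classical
  have hne : Nonempty (Σ n : ℕ, Fin (n + 1) → ℝ) := ⟨⟨0, fun _ => 0⟩⟩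
  rw [Wq, Wq]
  refine ENNReal.iSup_add_iSup_le ?_
  intro p p'
  split_ifs with hp hp' hp'
  · obtain ⟨z, hzm, hzr, hzle⟩ := pvar_concat (q := q) (g := g) p.2 p'.2 hp.1 hp'.1
      (fun i j => hsep _ (hp.2 i) _ (hp'.2 j))
    refine le_trans hzle (pvar_le_Wq hzm ?_)
    intro k
    rcases hzr k with ⟨i, hi⟩ | ⟨i, hi⟩
    · exact h1 (hi ▸ hp.2 i)
    · exact h2 (hi ▸ hp'.2 i)
  · simpa using pvar_le_Wq hp.1 fun k => h1 (hp.2 k)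
  · simpa using pvar_le_Wq hp'.1 fun k => h2 (hp'.2 k)
  · simp

lemma exists_right {q : ℝ} {g : ℝ → ℝ} {a b c : ℝ} (hc : a ≤ c) (hcb : c < b)
    (hfin : Wq q g (Set.Icc a b) ≠ ⊤) {δ : ℝ≥0∞} (hδ0 : δ ≠ 0) (hδt : δ ≠ ⊤) :
    ∃ s, s ∈ Set.Ioc c b ∧ Wq q g (Set.Ioo c s) ≤ δ := by
  classical
  by_contra hcon
  push_neg at hcon
  have key : ∀ k : ℕ, ∀ s ∈ Set.Ioc c b, (k : ℝ≥0∞) * δ ≤ Wq q g (Set.Ioo c s) := by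
    intro k
    induction k with
    | zero => intro s _; simp
    | succ k ih =>
      intro s hs
      have h1 : δ < Wq q g (Set.Ioo c s) := hcon s hs
      rw [Wq, lt_iSup_iff] at h1
      obtain ⟨p, hp⟩ := h1
      by_cases hv : StrictMono p.2 ∧ ∀ k, p.2 k ∈ Set.Ioo c s
      · rw [if_pos hv] at hp
        set s' := p.2 0 with hs'
        have hs'mem : s' ∈ Set.Ioo c s := hv.2 0
        have ih' := ih s' ⟨hs'mem.1, le_trans hs'mem.2.le hs.2⟩
        have hpv : pvar q g p.2 ≤ Wq q g (Set.range p.2) :=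
          pvar_le_Wq hv.1 fun k => Set.mem_range_self k
        have hadd : Wq q g (Set.Ioo c s') + Wq q g (Set.range p.2) ≤ Wq q g (Set.Ioo c s) := by
          apply Wq_add_le
          · exact Set.Ioo_subset_Ioo_right hs'mem.2.le
          · rintro v ⟨j, rfl⟩; exact hv.2 j
          · rintro u hu v ⟨j, rfl⟩
            exact lt_of_lt_of_le hu.2 (hv.1.monotone (Fin.zero_le j))
        calc ((k + 1 : ℕ) : ℝ≥0∞) * δ = (k : ℝ≥0∞) * δ + δ := by push_cast; ring
          _ ≤ Wq q g (Set.Ioo c s') + Wq q g (Set.range p.2) :=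
              add_le_add ih' (le_trans hp.le hpv)
          _ ≤ Wq q g (Set.Ioo c s) := hadd
      · rw [if_neg hv] at hp
        exact absurd hp (by simp)
  have hb : ∀ k : ℕ, (k : ℝ≥0∞) * δ ≤ Wq q g (Set.Icc a b) := fun k =>
    le_trans (key k b ⟨hcb, le_rfl⟩)
      (Wq_mono fun u hu => ⟨le_trans hc hu.1.le, hu.2.le⟩)
  obtain ⟨k, hk⟩ := ENNReal.exists_nat_gt (ENNReal.div_lt_top hfin hδ0).ne
  rw [ENNReal.div_lt_iff (Or.inl hδ0) (Or.inl hδt)] at hk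
  exact absurd (hb k) (not_le.2 hk)

lemma varq_le_rpow {q : ℝ} (hq0 : 0 < q) (g : ℝ → ℝ) (S : Set ℝ) :
    varq q g S ≤ (Wq q g S) ^ (1 / q) := by
  rw [varq]
  refine iSup_le fun n => iSup_le fun x => iSup_le fun hx => iSup_le fun hS => ?_
  exact ENNReal.rpow_le_rpow (pvar_le_Wq hx hS) (by positivity)

lemma Wq_le_rpow {q : ℝ} (hq0 : 0 < q) (g : ℝ → ℝ) (S : Set ℝ) :
    Wq q g S ≤ (varq q g S) ^ q := by
  rw [Wq]
  refine iSup_le fun p => ?_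
  split_ifs with hp
  · have h1 : pvar q g p.2 ^ (1 / q) ≤ varq q g S := by
      rw [varq]
      refine le_iSup_of_le p.1 (le_iSup_of_le p.2 ?_)
      exact le_iSup_of_le hp.1 (le_iSup_of_le hp.2 le_rfl)
    have h2 : (pvar q g p.2 ^ (1 / q)) ^ q ≤ varq q g S ^ q :=
      ENNReal.rpow_le_rpow h1 hq0.le
    rwa [← ENNReal.rpow_mul, one_div_mul_cancel hq0.ne', ENNReal.rpow_one] at h2
  · exact zero_le

/-- A function of finite `q`-bounded variation on `[a,b]` admits, for every `ε > 0`,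
a finite partition of `[a,b]` into intervals on whose interiors the `q`-variation
is `< ε`. -/
theorem stmt7 (q : ℝ) (hq : 1 ≤ q) (a b : ℝ) (hab : a < b) (g : ℝ → ℝ)
    (hfin : varq q g (Set.Icc a b) < ⊤) :
    ∀ ε > (0:ℝ), ∃ (N : ℕ) (t : Fin (N + 1) → ℝ),
      Monotone t ∧ t 0 = a ∧ t (Fin.last N) = b ∧
      ∀ i : Fin N, varq q g (Set.Ioo (t i.castSucc) (t i.succ)) < ENNReal.ofReal ε := by
  classical
  intro ε hε
  have hq0 : 0 < q := lt_of_lt_of_le one_pos hq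
  have hεq : 0 < ε ^ q := Real.rpow_pos_of_pos hε q
  set δ : ℝ≥0∞ := ENNReal.ofReal (ε ^ q) / 2 with hδdef
  have hofr0 : ENNReal.ofReal (ε ^ q) ≠ 0 := by simp [ENNReal.ofReal_pos.2 hεq, (ENNReal.ofReal_pos.2 hεq).ne']
  have hδ0 : δ ≠ 0 := by
    rw [hδdef]
    exact (ENNReal.div_pos hofr0 ENNReal.ofNat_ne_top).ne'
  have hδt : δ ≠ ⊤ := by
    rw [hδdef]
    exact (ENNReal.div_lt_top ENNReal.ofReal_ne_top (by norm_num)).ne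
  have hδlt : δ < ENNReal.ofReal (ε ^ q) := by
    rw [hδdef]
    exact ENNReal.half_lt_self hofr0 ENNReal.ofReal_ne_top
  have hVfin : Wq q g (Set.Icc a b) ≠ ⊤ :=
    (lt_of_le_of_lt (Wq_le_rpow hq0 g _)
      (ENNReal.rpow_lt_top_of_nonneg hq0.le hfin.ne)).ne
  -- the greedy "next point" function
  set next : ℝ → ℝ := fun c =>
    sSup {s | s ∈ Set.Ioc c b ∧ Wq q g (Set.Ioo c s) ≤ δ} with hnextdef
  have hnext : ∀ c, a ≤ c → c < b →
      c < next c ∧ next c ≤ b ∧ Wq q g (Set.Ioo c (next c)) ≤ δ := by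
    intro c hac hcb
    have hne : {s | s ∈ Set.Ioc c b ∧ Wq q g (Set.Ioo c s) ≤ δ}.Nonempty := by
      obtain ⟨s, hs1, hs2⟩ := exists_right (q := q) (g := g) hac hcb hVfin hδ0 hδt
      exact ⟨s, hs1, hs2⟩
    have hbdd : BddAbove {s | s ∈ Set.Ioc c b ∧ Wq q g (Set.Ioo c s) ≤ δ} :=
      ⟨b, fun s hs => hs.1.2⟩
    refine ⟨?_, ?_, ?_⟩
    · obtain ⟨s, hs⟩ := hne
      exact lt_of_lt_of_le hs.1.1 (le_csSup hbdd hs)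
    · exact csSup_le hne fun s hs => hs.1.2
    · rw [Wq]
      refine iSup_le fun p => ?_
      split_ifs with hp
      · obtain ⟨hmono, hmem⟩ := hp
        have hM : p.2 (Fin.last _) < next c := (hmem _).2
        obtain ⟨s, hs, hMs⟩ := exists_lt_of_lt_csSup hne hM
        refine le_trans (pvar_le_Wq hmono fun k => ?_) hs.2
        exact ⟨(hmem k).1, lt_of_le_of_lt (hmono.monotone (Fin.le_last k)) hMs⟩
      · exact zero_le
  -- the greedy sequence
  set u : ℕ → ℝ := fun k => Nat.rec a (fun _ c => if c < b then next c else b) k with hudef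
  have hu0 : u 0 = a := rfl
  have hustep : ∀ k, u (k + 1) = if u k < b then next (u k) else b := fun k => rfl
  have humem : ∀ k, a ≤ u k ∧ u k ≤ b := by
    intro k
    induction k with
    | zero => exact ⟨le_rfl, hab.le⟩
    | succ k ih =>
      rw [hustep]
      split_ifs with h
      · have h3 := hnext (u k) ih.1 h
        exact ⟨le_trans ih.1 h3.1.le, h3.2.1⟩
      · exact ⟨hab.le, le_rfl⟩
  have humono : Monotone u := by
    apply monotone_nat_of_le_succ
    intro k
    rw [hustep]
    split_ifs with h
    · exact (hnext (u k) (humem k).1 h).1.le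
    · exact (humem k).2
  have hreach : ∃ k, u k = b := by
    by_contra hcon
    push_neg at hcon
    have hlt : ∀ k, u k < b := fun k => lt_of_le_of_ne (humem k).2 (hcon k)
    have hsucc : ∀ k, u (k + 1) = next (u k) := fun k => by rw [hustep, if_pos (hlt k)]
    have hstrict : ∀ k, u k < u (k + 1) := fun k => by
      rw [hsucc]; exact (hnext _ (humem k).1 (hlt k)).1
    have hgap : ∀ k, δ < Wq q g (Set.Ioo (u k) (u (k + 2))) := by
      intro k
      by_contra hle
      push_neg at hle
      have hmemT : u (k + 2) ∈ {s | s ∈ Set.Ioc (u k) b ∧ Wq q g (Set.Ioo (u k) s) ≤ δ} :=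
        ⟨⟨lt_trans (hstrict k) (hstrict (k + 1)), (humem (k + 2)).2⟩, hle⟩
      have : u (k + 2) ≤ u (k + 1) := by
        rw [hsucc k]
        exact le_csSup ⟨b, fun s hs => hs.1.2⟩ hmemT
      exact absurd this (not_le.2 (hstrict (k + 1)))
    have hchain : ∀ m, ∑ j ∈ Finset.range m, Wq q g (Set.Ioo (u (2 * j)) (u (2 * j + 2))) ≤
        Wq q g (Set.Ioo (u 0) (u (2 * m))) := by
      intro m
      induction m with
      | zero => simp
      | succ m ih =>
        rw [Finset.sum_range_succ, Nat.mul_succ]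
        calc ∑ j ∈ Finset.range m, Wq q g (Set.Ioo (u (2 * j)) (u (2 * j + 2))) +
              Wq q g (Set.Ioo (u (2 * m)) (u (2 * m + 2)))
            ≤ Wq q g (Set.Ioo (u 0) (u (2 * m))) +
              Wq q g (Set.Ioo (u (2 * m)) (u (2 * m + 2))) := add_le_add ih le_rfl
          _ ≤ Wq q g (Set.Ioo (u 0) (u (2 * m + 2))) := by
              apply Wq_add_le
              · exact Set.Ioo_subset_Ioo_right (humono (Nat.le_add_right (2 * m) 2))
              · exact Set.Ioo_subset_Ioo_left (humono (Nat.zero_le _))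
              · intro v hv w hw
                exact lt_trans hv.2 hw.1
    have hsum : ∀ m : ℕ, (m : ℝ≥0∞) * δ ≤ Wq q g (Set.Icc a b) := by
      intro m
      calc (m : ℝ≥0∞) * δ = ∑ _j ∈ Finset.range m, δ := by
            simp [Finset.sum_const, nsmul_eq_mul]
        _ ≤ ∑ j ∈ Finset.range m, Wq q g (Set.Ioo (u (2 * j)) (u (2 * j + 2))) :=
            Finset.sum_le_sum fun j _ => (hgap (2 * j)).le
        _ ≤ Wq q g (Set.Ioo (u 0) (u (2 * m))) := hchain m
        _ ≤ Wq q g (Set.Icc a b) := by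
            apply Wq_mono
            intro v hv
            rw [hu0] at hv
            exact ⟨hv.1.le, le_trans hv.2.le (humem _).2⟩
    obtain ⟨k, hk⟩ := ENNReal.exists_nat_gt (ENNReal.div_lt_top hVfin hδ0).ne
    rw [ENNReal.div_lt_iff (Or.inl hδ0) (Or.inl hδt)] at hk
    exact absurd (hsum k) (not_le.2 hk)
  set k₀ := Nat.find hreach with hk₀def
  have hk₀ : u k₀ = b := Nat.find_spec hreach
  refine ⟨k₀, fun i => u i.val, ?_, ?_, ?_, ?_⟩
  · intro i j hij
    exact humono (show i.val ≤ j.val from hij)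
  · show u (0 : Fin (k₀ + 1)).val = a
    simp [hu0]
  · show u (Fin.last k₀).val = b
    simpa using hk₀
  · intro i
    have hib : u i.val < b :=
      lt_of_le_of_ne (humem _).2 (Nat.find_min hreach i.isLt)
    have hW : Wq q g (Set.Ioo (u i.val) (u (i.val + 1))) ≤ δ := by
      rw [hustep, if_pos hib]
      exact (hnext _ (humem _).1 hib).2.2
    have hcs : (fun i : Fin (k₀ + 1) => u i.val) i.castSucc = u i.val := rfl
    have hsc : (fun i : Fin (k₀ + 1) => u i.val) i.succ = u (i.val + 1) := rfl
    rw [hcs, hsc]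
    calc varq q g (Set.Ioo (u i.val) (u (i.val + 1)))
        ≤ Wq q g (Set.Ioo (u i.val) (u (i.val + 1))) ^ (1 / q) := varq_le_rpow hq0 g _
      _ < (ENNReal.ofReal (ε ^ q)) ^ (1 / q) :=
          ENNReal.rpow_lt_rpow (lt_of_le_of_lt hW hδlt) (by positivity)
      _ = ENNReal.ofReal ε := by
          rw [ENNReal.ofReal_rpow_of_pos hεq, ← Real.rpow_mul hε.le,
            mul_one_div_cancel hq0.ne', Real.rpow_one]
end

section
/- Let α: [0,1] → ℝ be defined by α(x) = sin(2π · log(x)/log(2)) for x ∈ (0, 1/2] and α(x) = 0 elsewhere, and let p > 1. For each dyadic interval Q of level k (i.e., Q = [j 2^{-k}, (j+1)2^{-k}]) contained in [2^{-(i+1)}, 2^{-i}] with i < k, define c_Q = inf_Q α₊ − inf_{Q'} α₊ where α₊ = max(α, 0) and Q' is the parent dyadic interval of Q. Then |c_Q| ≤ C · 2^i · |Q| for an absolute constant C, and consequently Σ_{Q ∈ D^k} |c_Q|^p ≤ C^p / (1 − 2^{1−p}) uniformly in k. -/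
/-- The potential `α(x) = sin(2π log x / log 2)` on `(0, 1/2]`, `0` elsewhere. -/
noncomputable def alphaFn : ℝ → ℝ := fun x =>
  if x ∈ Set.Ioc (0:ℝ) (1/2) then Real.sin (2 * Real.pi * Real.log x / Real.log 2) else 0

/-- Positive part of `alphaFn`. -/
noncomputable def alphaPlus : ℝ → ℝ := fun x => max (alphaFn x) 0

/-- The dyadic interval of generation `k` and index `j`. -/
def dyadic (k j : ℕ) : Set ℝ :=
  Set.Icc ((j : ℝ) * 2 ^ (-(k : ℤ))) (((j : ℝ) + 1) * 2 ^ (-(k : ℤ)))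

/-- `c_Q = inf_Q α₊ - inf_{Q'} α₊`, `Q'` the parent dyadic interval of `Q`. -/
noncomputable def cQ (k j : ℕ) : ℝ :=
  sInf (alphaPlus '' dyadic k j) - sInf (alphaPlus '' dyadic (k - 1) (j / 2))

lemma alphaPlus_nonneg (x : ℝ) : 0 ≤ alphaPlus x := le_max_right _ _

lemma alphaPlus_zero_on {x : ℝ} (hx : x ∈ Set.Icc (1/2:ℝ) 1) : alphaPlus x = 0 := by
  have h2 : Real.log 2 ≠ 0 := by positivity
  have : alphaFn x = 0 := by
    unfold alphaFn
    split_ifs with h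
    · have hx2 : x = 1/2 := le_antisymm h.2 hx.1
      rw [hx2]
      rw [show (1:ℝ)/2 = 2⁻¹ by norm_num, Real.log_inv]
      rw [show 2 * Real.pi * -Real.log 2 / Real.log 2 = -(2*Real.pi) by field_simp]
      rw [Real.sin_neg, Real.sin_two_pi, neg_zero]
    · rfl
  simp [alphaPlus, this]

lemma log_lip {a x y : ℝ} (ha : 0 < a) (hx : a ≤ x) (hy : a ≤ y) :
    |Real.log x - Real.log y| ≤ |x - y| / a := by
  wlog h : y ≤ x generalizing x y
  · rw [abs_sub_comm, abs_sub_comm x y]; exact this hy hx (le_of_not_ge h)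
  have hy0 : 0 < y := lt_of_lt_of_le ha hy
  have hx0 : 0 < x := lt_of_lt_of_le ha hx
  have h1 : Real.log x - Real.log y = Real.log (x / y) := (Real.log_div hx0.ne' hy0.ne').symm
  have h2 : Real.log (x / y) ≤ x / y - 1 := Real.log_le_sub_one_of_pos (div_pos hx0 hy0)
  have h3 : x / y - 1 = (x - y) / y := by field_simp
  have h4 : (x - y) / y ≤ (x - y) / a := by
    apply div_le_div_of_nonneg_left (by linarith) ha hy
  have h5 : 0 ≤ Real.log x - Real.log y := by
    have := Real.log_le_log hy0 h
    linarith
  rw [abs_of_nonneg h5, abs_of_nonneg (by linarith : (0:ℝ) ≤ x - y)]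
  calc Real.log x - Real.log y ≤ x/y - 1 := by rw [h1]; exact h2
    _ = (x-y)/y := h3
    _ ≤ (x-y)/a := h4

lemma lipOct (i : ℕ) {x y : ℝ}
    (hx : x ∈ Set.Icc ((2:ℝ) ^ (-(i:ℤ)-1)) ((2:ℝ) ^ (-(i:ℤ))))
    (hy : y ∈ Set.Icc ((2:ℝ) ^ (-(i:ℤ)-1)) ((2:ℝ) ^ (-(i:ℤ)))) :
    |alphaPlus x - alphaPlus y| ≤ 20 * 2 ^ i * |x - y| := by
  rcases Nat.eq_zero_or_pos i with hi | hi
  · subst hi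
    have h1 : x ∈ Set.Icc (1/2:ℝ) 1 := by
      simpa [show ((2:ℝ)^(-(0:ℤ)-1)) = 1/2 by norm_num, show ((2:ℝ)^(-(0:ℤ))) = 1 by norm_num] using hx
    have h2 : y ∈ Set.Icc (1/2:ℝ) 1 := by
      simpa [show ((2:ℝ)^(-(0:ℤ)-1)) = 1/2 by norm_num, show ((2:ℝ)^(-(0:ℤ))) = 1 by norm_num] using hy
    rw [alphaPlus_zero_on h1, alphaPlus_zero_on h2]
    simp [abs_nonneg]
  · -- i ≥ 1 : both points are in (0, 1/2]
    have ha : (0:ℝ) < 2 ^ (-(i:ℤ)-1) := by positivity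
    have hhalf : (2:ℝ) ^ (-(i:ℤ)) ≤ 1/2 := by
      rw [show (1/2 : ℝ) = 2^(-1:ℤ) by norm_num]
      apply zpow_le_zpow_right₀ one_le_two (by omega)
    have hmem : ∀ z ∈ Set.Icc ((2:ℝ) ^ (-(i:ℤ)-1)) ((2:ℝ) ^ (-(i:ℤ))), z ∈ Set.Ioc (0:ℝ) (1/2) :=
      fun z hz => ⟨lt_of_lt_of_le ha hz.1, hz.2.trans hhalf⟩
    have fx : alphaFn x = Real.sin (2 * Real.pi * Real.log x / Real.log 2) := by
      unfold alphaFn; rw [if_pos (hmem x hx)]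
    have fy : alphaFn y = Real.sin (2 * Real.pi * Real.log y / Real.log 2) := by
      unfold alphaFn; rw [if_pos (hmem y hy)]
    have step1 : |alphaPlus x - alphaPlus y| ≤ |alphaFn x - alphaFn y| := by
      unfold alphaPlus
      exact abs_max_sub_max_le_abs _ _ _
    have step2 : |alphaFn x - alphaFn y| ≤
        |2 * Real.pi * Real.log x / Real.log 2 - 2 * Real.pi * Real.log y / Real.log 2| := by
      rw [fx, fy]
      set a := 2 * Real.pi * Real.log x / Real.log 2
      set b := 2 * Real.pi * Real.log y / Real.log 2
      rw [Real.sin_sub_sin]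
      calc |2 * Real.sin ((a-b)/2) * Real.cos ((a+b)/2)|
          = 2 * |Real.sin ((a-b)/2)| * |Real.cos ((a+b)/2)| := by
            rw [abs_mul, abs_mul]; norm_num
        _ ≤ 2 * |(a-b)/2| * 1 := by
            apply mul_le_mul (by have := Real.abs_sin_le_abs (x := (a-b)/2); nlinarith)
              (Real.abs_cos_le_one _) (abs_nonneg _) (by positivity)
        _ = |a - b| := by rw [abs_div]; simp [abs_of_nonneg]; ring
    have hlog2 : (0:ℝ) < Real.log 2 := Real.log_pos one_lt_two
    have step3 : |2 * Real.pi * Real.log x / Real.log 2 - 2 * Real.pi * Real.log y / Real.log 2|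
        = (2 * Real.pi / Real.log 2) * |Real.log x - Real.log y| := by
      rw [← abs_of_pos (show (0:ℝ) < 2 * Real.pi / Real.log 2 by positivity), ← abs_mul]
      ring_nf
    have step4 : |Real.log x - Real.log y| ≤ |x - y| / 2 ^ (-(i:ℤ)-1) :=
      log_lip ha hx.1 hy.1
    have key : (2 * Real.pi / Real.log 2) * ((2:ℝ) ^ (-(i:ℤ)-1))⁻¹ ≤ 20 * 2 ^ i := by
      have h1 : ((2:ℝ) ^ (-(i:ℤ)-1))⁻¹ = 2 * 2 ^ i := by
        rw [← zpow_neg, neg_sub, sub_neg_eq_add]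
        rw [show (1:ℤ) + i = ((i+1 : ℕ):ℤ) by push_cast; ring, zpow_natCast]
        ring
      rw [h1]
      have hpi : Real.pi < 3.15 := Real.pi_lt_d2
      have hl2 : (0.6931471803:ℝ) < Real.log 2 := Real.log_two_gt_d9
      have h2 : 2 * Real.pi / Real.log 2 ≤ 10 := by
        rw [div_le_iff₀ hlog2]; nlinarith
      have h3 : (0:ℝ) < 2 ^ i := by positivity
      nlinarith
    calc |alphaPlus x - alphaPlus y| ≤ (2 * Real.pi / Real.log 2) * |Real.log x - Real.log y| := by
          rw [← step3]; exact step1.trans step2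
      _ ≤ (2 * Real.pi / Real.log 2) * (|x - y| / 2 ^ (-(i:ℤ)-1)) := by
          apply mul_le_mul_of_nonneg_left step4 (by positivity)
      _ = ((2 * Real.pi / Real.log 2) * ((2:ℝ) ^ (-(i:ℤ)-1))⁻¹) * |x - y| := by
          rw [div_eq_mul_inv]; ring
      _ ≤ 20 * 2 ^ i * |x - y| := mul_le_mul_of_nonneg_right key (abs_nonneg _)

lemma bddB (S : Set ℝ) : BddBelow (alphaPlus '' S) :=
  ⟨0, by rintro z ⟨x, -, rfl⟩; exact alphaPlus_nonneg x⟩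

lemma sInf_image_zero {S : Set ℝ} {z : ℝ} (hz : z ∈ S) (h : alphaPlus z = 0) :
    sInf (alphaPlus '' S) = 0 := by
  apply le_antisymm
  · calc sInf (alphaPlus '' S) ≤ alphaPlus z := csInf_le (bddB S) ⟨z, hz, rfl⟩
      _ = 0 := h
  · exact le_csInf ⟨alphaPlus z, ⟨z, hz, rfl⟩⟩ (by rintro w ⟨x, -, rfl⟩; exact alphaPlus_nonneg x)

lemma sInf_diff_le {L d : ℝ} {Q P S : Set ℝ} (hQP : Q ⊆ P) (hPS : P ⊆ S) (hQ : Q.Nonempty)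
    (hlip : ∀ x ∈ S, ∀ y ∈ S, |alphaPlus x - alphaPlus y| ≤ L * |x - y|)
    (hdiam : ∀ x ∈ P, ∀ y ∈ P, |x - y| ≤ d) (hL : 0 ≤ L) :
    |sInf (alphaPlus '' Q) - sInf (alphaPlus '' P)| ≤ L * d := by
  obtain ⟨x₀, hx₀⟩ := hQ
  have hPne : (alphaPlus '' P).Nonempty := ⟨alphaPlus x₀, x₀, hQP hx₀, rfl⟩
  have hle : sInf (alphaPlus '' P) ≤ sInf (alphaPlus '' Q) :=
    csInf_le_csInf (bddB P) ⟨alphaPlus x₀, x₀, hx₀, rfl⟩ (Set.image_mono hQP)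
  rw [abs_of_nonneg (by linarith)]
  have h1 : sInf (alphaPlus '' Q) ≤ alphaPlus x₀ := csInf_le (bddB Q) ⟨x₀, hx₀, rfl⟩
  have h2 : alphaPlus x₀ - L * d ≤ sInf (alphaPlus '' P) := by
    apply le_csInf hPne
    rintro w ⟨y, hy, rfl⟩
    have := hlip x₀ (hPS (hQP hx₀)) y (hPS hy)
    have hd := hdiam x₀ (hQP hx₀) y hy
    have : |alphaPlus x₀ - alphaPlus y| ≤ L * d := this.trans (mul_le_mul_of_nonneg_left hd hL)
    have := abs_le.1 this
    linarith [this.1, this.2]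
  linarith

lemma dyadic_pow (k : ℕ) : ((2:ℝ)^(-(k:ℤ))) > 0 := by positivity

lemma mem_dyadic_left (k j : ℕ) : (j:ℝ) * 2^(-(k:ℤ)) ∈ dyadic k j := by
  constructor
  · exact le_refl _
  · nlinarith [dyadic_pow k]

lemma dyadic_subset_parent {k : ℕ} (hk : 1 ≤ k) (j : ℕ) :
    dyadic k j ⊆ dyadic (k-1) (j/2) := by
  have hp : ((2:ℝ)^(-((k-1:ℕ):ℤ))) = 2 * 2^(-(k:ℤ)) := by
    have : ((k-1:ℕ):ℤ) = (k:ℤ) - 1 := by omega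
    rw [this, neg_sub, sub_eq_add_neg, zpow_add₀ (two_ne_zero (α := ℝ))]
    norm_num
  unfold dyadic
  rw [hp]
  apply Set.Icc_subset_Icc
  · have h1 : ((j/2 : ℕ):ℝ) * 2 ≤ (j:ℝ) := by
      have := Nat.div_mul_le_self j 2
      exact_mod_cast this
    have := dyadic_pow k
    nlinarith
  · have h2 : (j:ℝ) + 1 ≤ (((j/2:ℕ):ℝ) + 1) * 2 := by
      have : j + 1 ≤ (j/2 + 1) * 2 := by omega
      exact_mod_cast this
    have := dyadic_pow k
    nlinarith

lemma dyadic_diam {k j : ℕ} {x y : ℝ} (hx : x ∈ dyadic k j) (hy : y ∈ dyadic k j) :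
    |x - y| ≤ 2^(-(k:ℤ)) := by
  rw [abs_le]
  unfold dyadic at hx hy
  constructor <;> nlinarith [hx.1, hx.2, hy.1, hy.2, dyadic_pow k]

lemma alphaPlus_pow_zero (n : ℕ) : alphaPlus ((2:ℝ)^(-(n:ℤ)-1)) = 0 := by
  have hmem : (2:ℝ)^(-(n:ℤ)-1) ∈ Set.Ioc (0:ℝ) (1/2) := by
    constructor
    · positivity
    · rw [show (1/2:ℝ) = 2^(-1:ℤ) by norm_num]
      apply zpow_le_zpow_right₀ one_le_two (by omega)
  have hlog2 : Real.log 2 ≠ 0 := (Real.log_pos one_lt_two).ne'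
  have : alphaFn ((2:ℝ)^(-(n:ℤ)-1)) = 0 := by
    unfold alphaFn
    rw [if_pos hmem, Real.log_zpow]
    have harg : 2 * Real.pi * ((((-(n:ℤ)-1) : ℤ) : ℝ) * Real.log 2) / Real.log 2
        = (-(2*((n:ℤ)+1)) : ℤ) * Real.pi := by
      field_simp
      ring_nf
      push_cast; ring
    rw [harg, Real.sin_int_mul_pi]
  simp [alphaPlus, this]

lemma two_zpow_mul (a b : ℤ) : (2:ℝ)^a * (2:ℝ)^b = 2^(a+b) :=
  (zpow_add₀ two_ne_zero a b).symm

lemma part1 (k i j : ℕ) (hik : i < k)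
    (hsub : dyadic k j ⊆ Set.Icc ((2:ℝ) ^ (-(i : ℤ) - 1)) ((2:ℝ) ^ (-(i : ℤ)))) :
    |cQ k j| ≤ 40 * 2 ^ i * 2 ^ (-(k : ℤ)) := by
  have hk1 : 1 ≤ k := by omega
  have hpk := dyadic_pow k
  -- endpoint inequalities
  have hLmem := hsub (mem_dyadic_left k j)
  have hRmem : ((j:ℝ)+1) * 2^(-(k:ℤ)) ∈ Set.Icc ((2:ℝ) ^ (-(i:ℤ)-1)) ((2:ℝ)^(-(i:ℤ))) := by
    apply hsub
    constructor
    · nlinarith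
    · exact le_refl _
  have hL : (2:ℝ)^(-(i:ℤ)-1) ≤ (j:ℝ) * 2^(-(k:ℤ)) := hLmem.1
  have hR : ((j:ℝ)+1) * 2^(-(k:ℤ)) ≤ (2:ℝ)^(-(i:ℤ)) := hRmem.2
  -- nat index inequalities
  have hj1 : 2^(k-i-1) ≤ j := by
    have h1 : (2:ℝ)^((k-i-1:ℕ):ℤ) ≤ (j:ℝ) := by
      have h2 : (2:ℝ)^((k-i-1:ℕ):ℤ) = 2^(-(i:ℤ)-1) * 2^((k:ℕ):ℤ) := by
        rw [two_zpow_mul]; congr 1; omega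
      rw [h2]
      calc (2:ℝ)^(-(i:ℤ)-1) * 2^((k:ℕ):ℤ) ≤ ((j:ℝ) * 2^(-(k:ℤ))) * 2^((k:ℕ):ℤ) := by
            apply mul_le_mul_of_nonneg_right hL (by positivity)
        _ = (j:ℝ) * (2^(-(k:ℤ)) * 2^((k:ℕ):ℤ)) := by ring
        _ = (j:ℝ) := by rw [two_zpow_mul]; norm_num
    have : ((2^(k-i-1):ℕ):ℝ) ≤ (j:ℝ) := by
      push_cast
      rw [← zpow_natCast (2:ℝ) (k-i-1)] at *
      exact h1
    exact_mod_cast this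
  have hj2 : j + 1 ≤ 2^(k-i) := by
    have h1 : ((j:ℝ)+1) ≤ (2:ℝ)^((k-i:ℕ):ℤ) := by
      have h2 : (2:ℝ)^((k-i:ℕ):ℤ) = 2^(-(i:ℤ)) * 2^((k:ℕ):ℤ) := by
        rw [two_zpow_mul]; congr 1; omega
      rw [h2]
      calc (j:ℝ)+1 = (((j:ℝ)+1) * 2^(-(k:ℤ))) * 2^((k:ℕ):ℤ) := by
            rw [mul_assoc, two_zpow_mul]; norm_num
        _ ≤ (2:ℝ)^(-(i:ℤ)) * 2^((k:ℕ):ℤ) := by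
            apply mul_le_mul_of_nonneg_right hR (by positivity)
    have : ((j+1:ℕ):ℝ) ≤ ((2^(k-i):ℕ):ℝ) := by
      push_cast
      rw [← zpow_natCast (2:ℝ) (k-i)]
      push_cast at h1 ⊢
      exact h1
    exact_mod_cast this
  rcases eq_or_lt_of_le (Nat.succ_le_of_lt hik) with hk2 | hk2
  · -- k = i + 1 : cQ = 0
    have hj : j = 1 := by
      have e1 : k - i - 1 = 0 := by omega
      have e2 : k - i = 1 := by omega
      rw [e1] at hj1; rw [e2] at hj2
      omega
    subst hj
    have hz : (2:ℝ)^(-(i:ℤ)-1) = ((1:ℕ):ℝ) * 2^(-(k:ℤ)) := by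
      rw [Nat.cast_one, one_mul]; congr 1; omega
    have hzQ : (2:ℝ)^(-(i:ℤ)-1) ∈ dyadic k 1 := by
      rw [hz]; exact mem_dyadic_left k 1
    have hzP : (2:ℝ)^(-(i:ℤ)-1) ∈ dyadic (k-1) 0 := by
      constructor
      · simp; positivity
      · have : ((k-1:ℕ):ℤ) = (i:ℤ) := by omega
        simp only [Nat.cast_zero, zero_add, one_mul, Nat.cast_ofNat, this]
        apply zpow_le_zpow_right₀ one_le_two (by omega)
    unfold cQ
    rw [show (1:ℕ)/2 = 0 by norm_num]
    rw [sInf_image_zero hzQ (alphaPlus_pow_zero i), sInf_image_zero hzP (alphaPlus_pow_zero i)]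
    simp only [sub_zero, abs_zero]
    positivity
  · -- k ≥ i + 2 : Lipschitz estimate
    have hki2 : i + 2 ≤ k := hk2
    -- parent index bounds
    have hp1 : 2^(k-i-2) ≤ j/2 := by
      have : 2^(k-i-2) * 2 ≤ j := by
        have : 2^(k-i-2)*2 = 2^(k-i-1) := by
          rw [← pow_succ]; congr 1; omega
        omega
      omega
    have hp2 : j/2 + 1 ≤ 2^(k-i-1) := by
      have h2 : 2^(k-i-1)*2 = 2^(k-i) := by rw [← pow_succ]; congr 1; omega
      omega
    -- parent ⊆ octave
    have hparent : dyadic (k-1) (j/2) ⊆ Set.Icc ((2:ℝ)^(-(i:ℤ)-1)) ((2:ℝ)^(-(i:ℤ))) := by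
      unfold dyadic
      apply Set.Icc_subset_Icc
      · calc (2:ℝ)^(-(i:ℤ)-1) = 2^((k-i-2:ℕ):ℤ) * 2^(-((k-1:ℕ):ℤ)) := by
              rw [two_zpow_mul]; congr 1; omega
          _ ≤ ((j/2:ℕ):ℝ) * 2^(-((k-1:ℕ):ℤ)) := by
              apply mul_le_mul_of_nonneg_right _ (by positivity)
              rw [zpow_natCast]
              exact_mod_cast hp1
      · calc (((j/2:ℕ):ℝ)+1) * 2^(-((k-1:ℕ):ℤ)) ≤ (2:ℝ)^((k-i-1:ℕ):ℤ) * 2^(-((k-1:ℕ):ℤ)) := by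
              apply mul_le_mul_of_nonneg_right _ (by positivity)
              rw [zpow_natCast]
              exact_mod_cast hp2
          _ = (2:ℝ)^(-(i:ℤ)) := by rw [two_zpow_mul]; congr 1; omega
    have hdiam : ∀ x ∈ dyadic (k-1) (j/2), ∀ y ∈ dyadic (k-1) (j/2), |x - y| ≤ 2 * 2^(-(k:ℤ)) := by
      intro x hx y hy
      have := dyadic_diam hx hy
      have he : (2:ℝ)^(-((k-1:ℕ):ℤ)) = 2 * 2^(-(k:ℤ)) := by
        have h9 : (2:ℝ)^(1:ℤ) * 2^(-(k:ℤ)) = 2^(-((k-1:ℕ):ℤ)) := by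
          rw [two_zpow_mul]; congr 1; omega
        rw [← h9]; norm_num
      rw [he] at this
      exact this
    have hlip : ∀ x ∈ Set.Icc ((2:ℝ)^(-(i:ℤ)-1)) ((2:ℝ)^(-(i:ℤ))),
        ∀ y ∈ Set.Icc ((2:ℝ)^(-(i:ℤ)-1)) ((2:ℝ)^(-(i:ℤ))),
        |alphaPlus x - alphaPlus y| ≤ (20 * 2^i) * |x - y| :=
      fun x hx y hy => lipOct i hx hy
    have hQne : (dyadic k j).Nonempty := ⟨(j:ℝ) * 2^(-(k:ℤ)), mem_dyadic_left k j⟩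
    have := sInf_diff_le (dyadic_subset_parent hk1 j) hparent hQne hlip hdiam (by positivity)
    unfold cQ
    calc |sInf (alphaPlus '' dyadic k j) - sInf (alphaPlus '' dyadic (k-1) (j/2))|
        ≤ (20 * 2^i) * (2 * 2^(-(k:ℤ))) := this
      _ = 40 * 2^i * 2^(-(k:ℤ)) := by ring

lemma alphaPlus_at_zero : alphaPlus 0 = 0 := by
  unfold alphaPlus alphaFn
  simp

lemma cQ_zero {k : ℕ} : cQ k 0 = 0 := by
  have h1 : (0:ℝ) ∈ dyadic k 0 := by
    constructor
    · simp
    · positivity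
  have h2 : (0:ℝ) ∈ dyadic (k-1) 0 := by
    constructor
    · simp
    · positivity
  unfold cQ
  rw [show (0:ℕ)/2 = 0 by norm_num]
  rw [sInf_image_zero h1 alphaPlus_at_zero, sInf_image_zero h2 alphaPlus_at_zero]
  ring

lemma part2_pointwise {k j : ℕ} (hj1 : 1 ≤ j) (hj2 : j < 2^k) :
    |cQ k j| ≤ 40 * 2 ^ (-(1 + (Nat.log 2 j : ℤ))) := by
  set m := Nat.log 2 j with hm
  have hmk : m < k := Nat.log_lt_of_lt_pow (by omega) hj2
  have hlow : 2^m ≤ j := Nat.pow_log_le_self 2 (by omega)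
  have hhigh : j < 2^(m+1) := Nat.lt_pow_succ_log_self one_lt_two j
  set i := k - 1 - m with hi
  have hik : i < k := by omega
  have hsub : dyadic k j ⊆ Set.Icc ((2:ℝ) ^ (-(i : ℤ) - 1)) ((2:ℝ) ^ (-(i : ℤ))) := by
    unfold dyadic
    apply Set.Icc_subset_Icc
    · calc (2:ℝ)^(-(i:ℤ)-1) = 2^((m:ℕ):ℤ) * 2^(-(k:ℤ)) := by
            rw [two_zpow_mul]; congr 1; omega
        _ ≤ (j:ℝ) * 2^(-(k:ℤ)) := by
            apply mul_le_mul_of_nonneg_right _ (by positivity)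
            rw [zpow_natCast]
            exact_mod_cast hlow
    · calc ((j:ℝ)+1) * 2^(-(k:ℤ)) ≤ (2:ℝ)^((m+1:ℕ):ℤ) * 2^(-(k:ℤ)) := by
            apply mul_le_mul_of_nonneg_right _ (by positivity)
            rw [zpow_natCast]
            exact_mod_cast hhigh
        _ = (2:ℝ)^(-(i:ℤ)) := by rw [two_zpow_mul]; congr 1; omega
  have := part1 k i j hik hsub
  calc |cQ k j| ≤ 40 * 2^i * 2^(-(k:ℤ)) := this
    _ = 40 * (2^((i:ℕ):ℤ) * 2^(-(k:ℤ))) := by rw [zpow_natCast]; ring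
    _ = 40 * 2 ^ (-(1 + (m:ℤ))) := by rw [two_zpow_mul]; congr 2; omega

lemma sum_log_reindex (f : ℕ → ℝ) (k : ℕ) :
    ∑ j ∈ Finset.Ico 1 (2^k), f (Nat.log 2 j) = ∑ m ∈ Finset.range k, (2^m : ℝ) * f m := by
  induction k with
  | zero => simp
  | succ k ih =>
    have h1 : 1 ≤ 2^k := Nat.one_le_two_pow
    have h2 : 2^k ≤ 2^(k+1) := Nat.pow_le_pow_right (by norm_num) (by omega)
    rw [← Finset.sum_Ico_consecutive _ h1 h2, ih, Finset.sum_range_succ]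
    congr 1
    have hconst : ∀ j ∈ Finset.Ico (2^k) (2^(k+1)), f (Nat.log 2 j) = f k := by
      intro j hj
      rw [Finset.mem_Ico] at hj
      congr 1
      exact Nat.log_eq_of_pow_le_of_lt_pow hj.1 hj.2
    rw [Finset.sum_congr rfl hconst, Finset.sum_const, Nat.card_Ico]
    have : 2^(k+1) - 2^k = 2^k := by rw [pow_succ]; omega
    rw [this, nsmul_eq_mul]
    push_cast
    ring

/-- There is an absolute constant `C > 0` such that `|c_Q| ≤ C 2^i |Q|` for dyadic `Q`
of generation `k > i` contained in `[2^{-(i+1)}, 2^{-i}]`, and consequently for every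
`p > 1`, `Σ_{Q ∈ D^k} |c_Q|^p ≤ C^p / (1 - 2^{1-p})` uniformly in `k`. -/
theorem stmt8 : ∃ C : ℝ, 0 < C ∧
    (∀ k i j : ℕ, i < k →
      dyadic k j ⊆ Set.Icc ((2:ℝ) ^ (-(i : ℤ) - 1)) ((2:ℝ) ^ (-(i : ℤ))) →
      |cQ k j| ≤ C * 2 ^ i * 2 ^ (-(k : ℤ))) ∧
    (∀ p : ℝ, 1 < p → ∀ k : ℕ, 1 ≤ k →
      ∑ j ∈ Finset.range (2 ^ k), |cQ k j| ^ p ≤ C ^ p / (1 - 2 ^ (1 - p))) := by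
  refine ⟨40, by norm_num, part1, ?_⟩
  intro p hp k hk
  have hp0 : (0:ℝ) ≤ p := by linarith
  have hr0 : (0:ℝ) ≤ (2:ℝ)^(1-p) := Real.rpow_nonneg (by norm_num) _
  have hr1 : (2:ℝ)^(1-p) < 1 := Real.rpow_lt_one_of_one_lt_of_neg one_lt_two (by linarith)
  set r : ℝ := (2:ℝ)^(1-p) with hrdef
  have h2k : 0 < 2^k := Nat.pow_pos (by norm_num)
  -- split off j = 0
  rw [Finset.range_eq_Ico, Finset.sum_eq_sum_Ico_succ_bot h2k]
  have hz : |cQ k 0| ^ p = 0 := by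
    rw [cQ_zero, abs_zero, Real.zero_rpow (by linarith)]
  rw [hz, zero_add]
  -- pointwise bound
  have hbd : ∀ j ∈ Finset.Ico 1 (2^k),
      |cQ k j| ^ p ≤ (fun m => (40 * (2:ℝ) ^ (-(1 + (m:ℤ))))^p) (Nat.log 2 j) := by
    intro j hj
    rw [Finset.mem_Ico] at hj
    exact Real.rpow_le_rpow (abs_nonneg _) (part2_pointwise hj.1 hj.2) hp0
  have step1 := Finset.sum_le_sum hbd
  have step2 := sum_log_reindex (fun m => (40 * (2:ℝ) ^ (-(1 + (m:ℤ))))^p) k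
  -- evaluate each term
  have hterm : ∀ m : ℕ, (2^m : ℝ) * (40 * (2:ℝ) ^ (-(1 + (m:ℤ))))^p
      = (40:ℝ)^p * (2:ℝ)^(-p) * r^m := by
    intro m
    have h1 : ((40:ℝ) * (2:ℝ) ^ (-(1 + (m:ℤ))))^p
        = (40:ℝ)^p * ((2:ℝ) ^ (-(1 + (m:ℤ))))^p :=
      Real.mul_rpow (by norm_num) (by positivity)
    have e1 : ((2:ℝ) ^ (-(1 + (m:ℤ)))) = (2:ℝ) ^ ((-1 - (m:ℕ) : ℝ)) := by
      rw [← Real.rpow_intCast (2:ℝ) (-(1 + (m:ℤ)))]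
      push_cast
      ring_nf
    calc (2^m : ℝ) * (40 * (2:ℝ) ^ (-(1 + (m:ℤ))))^p
        = (2:ℝ)^((m:ℕ):ℝ) * ((40:ℝ)^p * ((2:ℝ)^((-1 - (m:ℝ))))^p) := by
          rw [h1, e1, ← Real.rpow_natCast (2:ℝ) m]
      _ = (40:ℝ)^p * ((2:ℝ)^((m:ℝ)) * (2:ℝ)^((-1-(m:ℝ))*p)) := by
          rw [← Real.rpow_mul (by norm_num)]; ring
      _ = (40:ℝ)^p * (2:ℝ)^((m:ℝ) + (-1-(m:ℝ))*p) := by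
          rw [← Real.rpow_add (by norm_num)]
      _ = (40:ℝ)^p * (2:ℝ)^(-p + (1-p)*(m:ℝ)) := by
          congr 1
          ring_nf
      _ = (40:ℝ)^p * ((2:ℝ)^(-p) * (2:ℝ)^((1-p)*(m:ℝ))) := by
          rw [← Real.rpow_add (by norm_num)]
      _ = (40:ℝ)^p * (2:ℝ)^(-p) * r^m := by
          rw [hrdef, ← Real.rpow_natCast ((2:ℝ)^((1:ℝ)-p)) m, ← Real.rpow_mul (by norm_num)]
          ring_nf
  have hgeom : ∑ m ∈ Finset.range k, r^m ≤ 1/(1-r) := by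
    have h := geom_sum_Ico_le_of_lt_one hr0 hr1 (m := 0) (n := k)
    rw [Finset.range_eq_Ico]
    simpa using h
  have h40 : (0:ℝ) ≤ (40:ℝ)^p := Real.rpow_nonneg (by norm_num) _
  have h2p : (2:ℝ)^(-p) ≤ 1 := Real.rpow_le_one_of_one_le_of_nonpos one_le_two (by linarith)
  have h2p0 : (0:ℝ) ≤ (2:ℝ)^(-p) := Real.rpow_nonneg (by norm_num) _
  have hinv : (0:ℝ) ≤ 1/(1-r) := by
    apply div_nonneg (by norm_num)
    linarith
  calc ∑ j ∈ Finset.Ico 1 (2^k), |cQ k j| ^ p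
      ≤ ∑ j ∈ Finset.Ico 1 (2^k), (40 * (2:ℝ) ^ (-(1 + (Nat.log 2 j:ℤ))))^p := step1
    _ = ∑ m ∈ Finset.range k, (2^m : ℝ) * (40 * (2:ℝ) ^ (-(1 + (m:ℤ))))^p := step2
    _ = ∑ m ∈ Finset.range k, (40:ℝ)^p * (2:ℝ)^(-p) * r^m :=
        Finset.sum_congr rfl (fun m _ => hterm m)
    _ = (40:ℝ)^p * (2:ℝ)^(-p) * ∑ m ∈ Finset.range k, r^m := by
        rw [Finset.mul_sum]
    _ ≤ (40:ℝ)^p * (2:ℝ)^(-p) * (1/(1-r)) := by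
        apply mul_le_mul_of_nonneg_left hgeom (by positivity)
    _ ≤ (40:ℝ)^p * 1 * (1/(1-r)) := by
        apply mul_le_mul_of_nonneg_right (mul_le_mul_of_nonneg_left h2p h40) hinv
    _ = (40:ℝ)^p / (1-r) := by ring
end
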